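/- Let H : ℤ₂ → F₂[[q]] be any bijection satisfying H ∘ T = T_{1,1+q²} ∘ H. Then for every positive integer n (regarded as an element of ℤ₂), the T-orbit of n contains 1 (i.e., there exists k with T^k(n) = 1) if and only if H(n) is a polynomial. -/

import Mathlib

open PowerSeries
open scoped Classical

/-- Shift map on `F₂[[q]]`: equals `x / q` whenever `q ∣ x`. -/
noncomputable def divq (x : PowerSeries (ZMod 2)) : PowerSeries (ZMod 2) :=
  PowerSeries.mk fun n => PowerSeries.coeff (n + 1) x

/-- `T_{A,B}(x) = x/q` if `q ∣ x`, and `(A*x + B)/q` otherwise.  (When `A`, `B`, `x` are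
all odd, `A*x + B` is divisible by `q`, so `divq` computes the true quotient there.) -/
noncomputable def Tab (A B x : PowerSeries (ZMod 2)) : PowerSeries (ZMod 2) :=
  if X ∣ x then divq x else divq (A * x + B)
/-- `half x` is the unique `y` with `x = 2 * y`, when `2 ∣ x` (and `0` otherwise). -/
noncomputable def half (x : ℤ_[2]) : ℤ_[2] :=
  if h : (2 : ℤ_[2]) ∣ x then h.choose else 0

/-- The `3x+1` map `T : ℤ₂ → ℤ₂`: `x/2` if `x` is even, `(3x+1)/2` if `x` is odd. -/
noncomputable def T3x1 (x : ℤ_[2]) : ℤ_[2] :=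
  if (2 : ℤ_[2]) ∣ x then half x else half (3 * x + 1)

/-- An element of `F₂[[q]]` is a polynomial if it has only finitely many nonzero
coefficients. -/
def IsPolynomial (x : PowerSeries (ZMod 2)) : Prop :=
  {n : ℕ | PowerSeries.coeff n x ≠ 0}.Finite

lemma coeff_divq (x : PowerSeries (ZMod 2)) (n : ℕ) :
    coeff n (divq x) = coeff (n+1) x := by
  simp [divq]

lemma divq_C_add_X_mul (a : ZMod 2) (y : PowerSeries (ZMod 2)) :
    divq (C a + X * y) = y := by
  ext n
  rw [coeff_divq, map_add, coeff_succ_X_mul, coeff_C, if_neg (Nat.succ_ne_zero n), zero_add]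

lemma divq_X_mul (y : PowerSeries (ZMod 2)) : divq (X * y) = y := by
  have := divq_C_add_X_mul 0 y
  simpa using this

lemma X_mul_divq {x : PowerSeries (ZMod 2)} (h : X ∣ x) : X * divq x = x := by
  obtain ⟨y, rfl⟩ := h
  rw [divq_X_mul]

lemma Tab_even (y : PowerSeries (ZMod 2)) (A B : PowerSeries (ZMod 2)) :
    Tab A B (X * y) = y := by
  rw [Tab, if_pos (dvd_mul_right X y), divq_X_mul]

lemma Tab_odd {x : PowerSeries (ZMod 2)} (B : PowerSeries (ZMod 2)) (h : ¬ X ∣ x) :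
    Tab 1 B x = divq (x + B) := by
  rw [Tab, if_neg h, one_mul]

lemma two_eq_zero' : (2 : PowerSeries (ZMod 2)) = 0 := by
  have h : (2 : PowerSeries (ZMod 2)) = C 2 := (map_ofNat _ 2).symm
  rw [h, show (2 : ZMod 2) = 0 by decide, map_zero]

lemma one_add_X_sq_ne : (1 + X^2 : PowerSeries (ZMod 2)) ≠ 0 := by
  intro h
  have := congrArg (constantCoeff) h
  simp at this

lemma one_add_X_ne : (1 + X : PowerSeries (ZMod 2)) ≠ 0 := by
  intro h
  have := congrArg (constantCoeff) h
  simp at this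

lemma X_dvd_add_B {x : PowerSeries (ZMod 2)} (h : ¬ X ∣ x) :
    X ∣ (x + (1 + X^2)) := by
  rw [X_dvd_iff] at h ⊢
  have hx1 : constantCoeff x = 1 := by
    revert h; generalize constantCoeff x = a; revert a; decide
  simp [hx1]
  decide

lemma X_mul_Tab_even {x : PowerSeries (ZMod 2)} (B : PowerSeries (ZMod 2)) (h : X ∣ x) :
    X * Tab 1 B x = x := by
  rw [Tab, if_pos h, X_mul_divq h]

lemma X_mul_Tab_odd {x : PowerSeries (ZMod 2)} (h : ¬ X ∣ x) :
    X * Tab 1 (1 + X^2) x = x + (1 + X^2) := by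
  rw [Tab_odd _ h, X_mul_divq (X_dvd_add_B h)]

lemma periodic2_Tab {x : PowerSeries (ZMod 2)}
    (h : Tab 1 (1+X^2) (Tab 1 (1+X^2) x) = x) :
    x = 0 ∨ x = 1 ∨ x = X ∨ x = 1 + X := by
  obtain ⟨y, hy⟩ : ∃ y, Tab 1 (1+X^2) x = y := ⟨_, rfl⟩
  rw [hy] at h
  have htwo := two_eq_zero'
  by_cases hx : X ∣ x <;> by_cases hyd : X ∣ y
  · have h1 : X * y = x := by rw [← hy]; exact X_mul_Tab_even _ hx
    have h2 : X * x = y := by rw [← h]; exact X_mul_Tab_even _ hyd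
    have key : (1 + X^2) * x = 0 := by
      linear_combination -h1 - X * h2 + X^2 * x * htwo
    left
    rcases mul_eq_zero.mp key with h' | h'
    · exact absurd h' one_add_X_sq_ne
    · exact h'
  · have h1 : X * y = x := by rw [← hy]; exact X_mul_Tab_even _ hx
    have h2 : X * x = y + (1 + X^2) := by rw [← h]; exact X_mul_Tab_odd hyd
    have key : (1 + X^2) * (y - 1) = 0 := by
      linear_combination -h2 - X * h1 + (X^2*y - 1 - X^2) * htwo
    have hy1 : y = 1 := by
      rcases mul_eq_zero.mp key with h' | h'
      · exact absurd h' one_add_X_sq_ne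
      · exact sub_eq_zero.mp h'
    right; right; left
    rw [← h1, hy1, mul_one]
  · have h1 : X * y = x + (1 + X^2) := by rw [← hy]; exact X_mul_Tab_odd hx
    have h2 : X * x = y := by rw [← h]; exact X_mul_Tab_even _ hyd
    have key : (1 + X^2) * (x - 1) = 0 := by
      linear_combination -h1 - X * h2 + (X^2*x - 1 - X^2) * htwo
    right; left
    rcases mul_eq_zero.mp key with h' | h'
    · exact absurd h' one_add_X_sq_ne
    · exact sub_eq_zero.mp h'
  · have h1 : X * y = x + (1 + X^2) := by rw [← hy]; exact X_mul_Tab_odd hx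
    have h2 : X * x = y + (1 + X^2) := by rw [← h]; exact X_mul_Tab_odd hyd
    have hxy : x = y := by
      have key : (1 + X) * (x - y) = 0 := by linear_combination h2 - h1
      rcases mul_eq_zero.mp key with h' | h'
      · exact absurd h' one_add_X_ne
      · exact sub_eq_zero.mp h'
    rw [← hxy] at h2
    have key : (1 + X) * (x - (1 + X)) = 0 := by
      linear_combination h2 + (x - X) * htwo
    right; right; right
    rcases mul_eq_zero.mp key with h' | h'
    · exact absurd h' one_add_X_ne
    · exact sub_eq_zero.mp h'

lemma isPoly_divq {x : PowerSeries (ZMod 2)} (h : IsPolynomial x) :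
    IsPolynomial (divq x) := by
  have : {n : ℕ | coeff n (divq x) ≠ 0} ⊆
      (fun n => n + 1) ⁻¹' {n : ℕ | coeff n x ≠ 0} := by
    intro n hn
    simpa [coeff_divq] using hn
  exact Set.Finite.subset (h.preimage (Function.Injective.injOn (add_left_injective 1))) this

lemma isPoly_add {x y : PowerSeries (ZMod 2)} (hx : IsPolynomial x) (hy : IsPolynomial y) :
    IsPolynomial (x + y) := by
  apply Set.Finite.subset (hx.union hy)
  intro n hn
  simp only [Set.mem_setOf_eq, map_add] at hn
  by_contra hc
  simp only [Set.mem_union, Set.mem_setOf_eq, not_or, not_not] at hc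
  rw [hc.1, hc.2, add_zero] at hn
  exact hn rfl

lemma isPoly_zero : IsPolynomial (0 : PowerSeries (ZMod 2)) := by
  apply Set.Finite.subset (Set.finite_empty); intro n hn; simp at hn

lemma isPoly_one : IsPolynomial (1 : PowerSeries (ZMod 2)) := by
  apply Set.Finite.subset (Set.finite_singleton 0)
  intro n hn
  simp only [Set.mem_setOf_eq, coeff_one] at hn
  simp only [Set.mem_singleton_iff]
  by_contra hc
  rw [if_neg hc] at hn; exact hn rfl

lemma isPoly_X : IsPolynomial (X : PowerSeries (ZMod 2)) := by
  apply Set.Finite.subset (Set.finite_singleton 1)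
  intro n hn
  simp only [Set.mem_setOf_eq, coeff_X] at hn
  simp only [Set.mem_singleton_iff]
  by_contra hc
  rw [if_neg hc] at hn; exact hn rfl

lemma isPoly_B : IsPolynomial (1 + X^2 : PowerSeries (ZMod 2)) := by
  apply isPoly_add isPoly_one
  apply Set.Finite.subset (Set.finite_singleton 2)
  intro n hn
  simp only [Set.mem_setOf_eq, coeff_X_pow] at hn
  simp only [Set.mem_singleton_iff]
  by_contra hc
  rw [if_neg hc] at hn; exact hn rfl

lemma isPoly_X_mul {x : PowerSeries (ZMod 2)} (h : IsPolynomial x) :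
    IsPolynomial (X * x) := by
  apply Set.Finite.subset (Set.Finite.union (Set.finite_singleton 0)
    ((h.image (fun n => n + 1))))
  intro n hn
  simp only [Set.mem_setOf_eq] at hn
  rcases n with _ | m
  · exact Or.inl rfl
  · right
    rw [coeff_succ_X_mul] at hn
    exact ⟨m, hn, rfl⟩

lemma isPoly_Tab_iff (x : PowerSeries (ZMod 2)) :
    IsPolynomial (Tab 1 (1+X^2) x) ↔ IsPolynomial x := by
  by_cases hx : X ∣ x
  · constructor
    · intro h
      rw [← X_mul_Tab_even (1+X^2) hx]
      exact isPoly_X_mul h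
    · intro h
      rw [Tab, if_pos hx]
      exact isPoly_divq h
  · constructor
    · intro h
      have h2 : x + (1+X^2) = X * Tab 1 (1+X^2) x := (X_mul_Tab_odd hx).symm
      have h3 : x = X * Tab 1 (1+X^2) x + (1+X^2) := by
        have htwo := two_eq_zero'
        linear_combination h2 - (1 + X^2) * htwo
      rw [h3]
      exact isPoly_add (isPoly_X_mul h) isPoly_B
    · intro h
      rw [Tab_odd _ hx]
      exact isPoly_divq (isPoly_add h isPoly_B)

def inS (x : PowerSeries (ZMod 2)) : Prop :=
  x = 0 ∨ x = 1 ∨ x = X ∨ x = 1 + X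

lemma Tab_odd_eq {x y : PowerSeries (ZMod 2)} (h : ¬ X ∣ x)
    (hxy : x + (1 + X^2) = X * y) : Tab 1 (1+X^2) x = y := by
  rw [Tab_odd _ h, hxy, divq_X_mul]

lemma not_X_dvd_one : ¬ (X : PowerSeries (ZMod 2)) ∣ 1 := by
  rw [X_dvd_iff]; simp

lemma not_X_dvd_one_add_X : ¬ (X : PowerSeries (ZMod 2)) ∣ (1 + X) := by
  rw [X_dvd_iff]; simp

lemma Tab_zero : Tab 1 (1+X^2) 0 = 0 := by
  have := Tab_even 0 1 (1+X^2)
  rwa [mul_zero] at this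

lemma Tab_one : Tab 1 (1+X^2) 1 = X := by
  apply Tab_odd_eq not_X_dvd_one
  have htwo := two_eq_zero'
  linear_combination htwo

lemma Tab_X : Tab 1 (1+X^2) X = 1 := by
  have := Tab_even 1 1 (1+X^2)
  rwa [mul_one] at this

lemma Tab_one_add_X : Tab 1 (1+X^2) (1 + X) = 1 + X := by
  apply Tab_odd_eq not_X_dvd_one_add_X
  have htwo := two_eq_zero'
  linear_combination htwo

lemma Tab_Tab_of_inS {x : PowerSeries (ZMod 2)} (h : inS x) :
    Tab 1 (1+X^2) (Tab 1 (1+X^2) x) = x := by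
  rcases h with rfl | rfl | rfl | rfl
  · rw [Tab_zero, Tab_zero]
  · rw [Tab_one, Tab_X]
  · rw [Tab_X, Tab_one]
  · rw [Tab_one_add_X, Tab_one_add_X]

lemma inS_Tab {x : PowerSeries (ZMod 2)} (h : inS x) : inS (Tab 1 (1+X^2) x) := by
  rcases h with rfl | rfl | rfl | rfl
  · rw [Tab_zero]; exact Or.inl rfl
  · rw [Tab_one]; exact Or.inr (Or.inr (Or.inl rfl))
  · rw [Tab_X]; exact Or.inr (Or.inl rfl)
  · rw [Tab_one_add_X]; exact Or.inr (Or.inr (Or.inr rfl))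

lemma repr_three {x : PowerSeries (ZMod 2)} (h : ∀ m, 3 ≤ m → coeff m x = 0) :
    x = C (coeff 0 x) +
        X * (C (coeff 1 x) + X * C (coeff 2 x)) := by
  ext n
  rcases n with _ | n
  · simp
  rcases n with _ | n
  · simp [coeff_succ_X_mul]
  rcases n with _ | n
  · simp [coeff_succ_X_mul, coeff_C]
  · rw [h (n+3) (by omega)]
    simp [coeff_succ_X_mul, coeff_C, coeff_X]

lemma orbit_base {x : PowerSeries (ZMod 2)} (h : ∀ m, 3 ≤ m → coeff m x = 0) :
    ∃ k, inS ((Tab 1 (1+X^2))^[k] x) := by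
  have hZ : ∀ a : ZMod 2, a = 0 ∨ a = 1 := by decide
  have hrepr := repr_three h
  have htwo := two_eq_zero'
  obtain h0 | h0 := hZ (coeff 0 x) <;>
    obtain h1 | h1 := hZ (coeff 1 x) <;>
    obtain h2 | h2 := hZ (coeff 2 x) <;>
    rw [h0, h1, h2] at hrepr <;>
    simp only [map_zero, map_one, mul_zero, add_zero, zero_add, mul_one] at hrepr
  · exact ⟨0, Or.inl hrepr⟩
  · refine ⟨1, ?_⟩
    rw [Function.iterate_one, hrepr, Tab_even]
    exact Or.inr (Or.inr (Or.inl rfl))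
  · exact ⟨0, Or.inr (Or.inr (Or.inl hrepr))⟩
  · refine ⟨1, ?_⟩
    rw [Function.iterate_one, hrepr, Tab_even]
    exact Or.inr (Or.inr (Or.inr rfl))
  · exact ⟨0, Or.inr (Or.inl hrepr)⟩
  · refine ⟨1, ?_⟩
    rw [Function.iterate_one, hrepr]
    have hodd : ¬ (X : PowerSeries (ZMod 2)) ∣ (1 + X * X) := by
      rw [X_dvd_iff]; simp
    rw [Tab_odd_eq (y := 0) hodd (by linear_combination (1 + X^2) * htwo)]
    exact Or.inl rfl
  · exact ⟨0, Or.inr (Or.inr (Or.inr hrepr))⟩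
  · refine ⟨1, ?_⟩
    rw [Function.iterate_one, hrepr]
    have hodd : ¬ (X : PowerSeries (ZMod 2)) ∣ (1 + X * (1 + X)) := by
      rw [X_dvd_iff]; simp
    rw [Tab_odd_eq (y := 1) hodd (by linear_combination (1 + X^2) * htwo)]
    exact Or.inr (Or.inl rfl)

lemma coeff_Tab_bound {x : PowerSeries (ZMod 2)} {d : ℕ} (hd : 3 ≤ d)
    (h : ∀ m, d + 1 ≤ m → coeff m x = 0) :
    ∀ m, d ≤ m → coeff m (Tab 1 (1+X^2) x) = 0 := by
  intro m hm
  by_cases hx : X ∣ x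
  · rw [Tab, if_pos hx, coeff_divq]
    exact h (m+1) (by omega)
  · rw [Tab_odd _ hx, coeff_divq, map_add, h (m+1) (by omega), zero_add,
      map_add, coeff_one, if_neg (by omega), coeff_X_pow, if_neg (by omega), add_zero]

lemma orbit_of_bound : ∀ (j : ℕ) (x : PowerSeries (ZMod 2)),
    (∀ m, 3 + j ≤ m → coeff m x = 0) →
    ∃ k, inS ((Tab 1 (1+X^2))^[k] x) := by
  intro j
  induction j with
  | zero => exact fun x hx => orbit_base hx
  | succ j ih =>
    intro x hx
    have hb : ∀ m, 3 + j ≤ m → coeff m (Tab 1 (1+X^2) x) = 0 :=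
      coeff_Tab_bound (by omega) (fun m hm => hx m (by omega))
    obtain ⟨k, hk⟩ := ih _ hb
    exact ⟨k + 1, by rwa [Function.iterate_succ_apply]⟩

lemma orbit_of_isPoly {x : PowerSeries (ZMod 2)} (h : IsPolynomial x) :
    ∃ k, inS ((Tab 1 (1+X^2))^[k] x) := by
  obtain ⟨N, hN⟩ := h.bddAbove
  apply orbit_of_bound N x
  intro m hm
  by_contra hc
  have := hN hc
  omega

lemma dvd2_iff (x : ℤ_[2]) : (2 : ℤ_[2]) ∣ x ↔ PadicInt.toZMod x = 0 := by
  rw [← RingHom.mem_ker, PadicInt.ker_toZMod, PadicInt.maximalIdeal_eq_span_p,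
    Ideal.mem_span_singleton]
  norm_num

lemma two_mul_half {x : ℤ_[2]} (h : (2:ℤ_[2]) ∣ x) : 2 * half x = x := by
  rw [half, dif_pos h]
  exact h.choose_spec.symm

lemma half_two_mul (y : ℤ_[2]) : half (2 * y) = y := by
  have h : (2:ℤ_[2]) ∣ 2 * y := dvd_mul_right 2 y
  have := two_mul_half h
  exact mul_left_cancel₀ two_ne_zero this

lemma odd_three_add {x : ℤ_[2]} (h : ¬ (2:ℤ_[2]) ∣ x) : (2:ℤ_[2]) ∣ 3 * x + 1 := by
  rw [dvd2_iff] at h ⊢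
  have h1 : PadicInt.toZMod x = 1 := by
    revert h; generalize PadicInt.toZMod x = a; revert a; decide
  rw [map_add, map_mul, h1, map_one, show ((3:ℤ_[2])) = ((3:ℕ):ℤ_[2]) by norm_num,
    map_natCast]
  decide

lemma two_mul_T3x1_even {x : ℤ_[2]} (h : (2:ℤ_[2]) ∣ x) : 2 * T3x1 x = x := by
  rw [T3x1, if_pos h]; exact two_mul_half h

lemma two_mul_T3x1_odd {x : ℤ_[2]} (h : ¬ (2:ℤ_[2]) ∣ x) : 2 * T3x1 x = 3 * x + 1 := by
  rw [T3x1, if_neg h]; exact two_mul_half (odd_three_add h)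

lemma periodic2_T3x1 {x : ℤ_[2]} (h : T3x1 (T3x1 x) = x) :
    x = 0 ∨ x = -1 ∨ x = 1 ∨ x = 2 := by
  obtain ⟨y, hy⟩ : ∃ y, T3x1 x = y := ⟨_, rfl⟩
  rw [hy] at h
  by_cases hx : (2:ℤ_[2]) ∣ x <;> by_cases hyd : (2:ℤ_[2]) ∣ y
  · have h1 : 2 * y = x := by rw [← hy]; exact two_mul_T3x1_even hx
    have h2 : 2 * x = y := by rw [← h]; exact two_mul_T3x1_even hyd
    have key : (3 : ℤ_[2]) * x = 0 := by linear_combination h1 + 2 * h2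
    left
    rcases mul_eq_zero.mp key with h' | h'
    · norm_num at h'
    · exact h'
  · have h1 : 2 * y = x := by rw [← hy]; exact two_mul_T3x1_even hx
    have h2 : 2 * x = 3 * y + 1 := by rw [← h]; exact two_mul_T3x1_odd hyd
    have key : y = 1 := by linear_combination 2 * h1 + h2
    right; right; right
    rw [← h1, key, mul_one]
  · have h1 : 2 * y = 3 * x + 1 := by rw [← hy]; exact two_mul_T3x1_odd hx
    have h2 : 2 * x = y := by rw [← h]; exact two_mul_T3x1_even hyd
    right; right; left
    linear_combination h1 + 2 * h2
  · have h1 : 2 * y = 3 * x + 1 := by rw [← hy]; exact two_mul_T3x1_odd hx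
    have h2 : 2 * x = 3 * y + 1 := by rw [← h]; exact two_mul_T3x1_odd hyd
    have hxy : x = y := by
      have key : (5 : ℤ_[2]) * (x - y) = 0 := by linear_combination h2 - h1
      rcases mul_eq_zero.mp key with h' | h'
      · norm_num at h'
      · exact sub_eq_zero.mp h'
    right; left
    rw [← hxy] at h2
    linear_combination -h2

def TN (n : ℕ) : ℕ := if n % 2 = 0 then n / 2 else (3 * n + 1) / 2

lemma dvd_cast_iff (n : ℕ) : (2:ℤ_[2]) ∣ (n:ℤ_[2]) ↔ 2 ∣ n := by
  rw [dvd2_iff, map_natCast, ZMod.natCast_eq_zero_iff]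

lemma cast_TN (n : ℕ) : T3x1 (n:ℤ_[2]) = (TN n : ℤ_[2]) := by
  by_cases h : 2 ∣ n
  · obtain ⟨m, rfl⟩ := h
    have hc : (2:ℤ_[2]) ∣ ((2*m : ℕ):ℤ_[2]) := (dvd_cast_iff _).mpr ⟨m, rfl⟩
    have : 2 * T3x1 ((2*m : ℕ):ℤ_[2]) = ((2*m : ℕ):ℤ_[2]) := two_mul_T3x1_even hc
    have h2 : ((2*m : ℕ):ℤ_[2]) = 2 * ((m:ℕ):ℤ_[2]) := by push_cast; ring
    have hTN : TN (2*m) = m := by simp [TN, Nat.mul_div_cancel_left, Nat.mul_mod_right]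
    rw [hTN, h2]
    rw [h2] at this
    exact mul_left_cancel₀ two_ne_zero this
  · obtain ⟨m, rfl⟩ : ∃ m, n = 2*m+1 := ⟨n/2, by omega⟩
    have hc : ¬ (2:ℤ_[2]) ∣ ((2*m+1 : ℕ):ℤ_[2]) := by
      rw [dvd_cast_iff]; omega
    have key : 2 * T3x1 ((2*m+1 : ℕ):ℤ_[2]) = 3 * ((2*m+1 : ℕ):ℤ_[2]) + 1 :=
      two_mul_T3x1_odd hc
    have h2 : 3 * ((2*m+1 : ℕ):ℤ_[2]) + 1 = 2 * ((3*m+2 : ℕ):ℤ_[2]) := by push_cast; ring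
    have hTN : TN (2*m+1) = 3*m+2 := by
      have : (2*m+1) % 2 = 1 := by omega
      rw [TN, if_neg (by omega)]
      omega
    rw [h2] at key
    rw [hTN]
    exact mul_left_cancel₀ two_ne_zero key

lemma iterate_cast (k n : ℕ) : T3x1^[k] (n:ℤ_[2]) = ((TN^[k] n : ℕ):ℤ_[2]) := by
  induction k with
  | zero => simp
  | succ k ih =>
    rw [Function.iterate_succ_apply', Function.iterate_succ_apply', ih, cast_TN]

lemma TN_pos {n : ℕ} (h : 0 < n) : 0 < TN n := by
  rw [TN]; split <;> omega

lemma TN_iter_pos (k : ℕ) {n : ℕ} (h : 0 < n) : 0 < TN^[k] n := by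
  induction k with
  | zero => simpa
  | succ k ih => rw [Function.iterate_succ_apply']; exact TN_pos ih

lemma T3x1_one : T3x1 (1:ℤ_[2]) = 2 := by
  have hodd : ¬ (2:ℤ_[2]) ∣ 1 := by rw [dvd2_iff, map_one]; decide
  have h4 : 2 * T3x1 (1:ℤ_[2]) = 2 * 2 := by rw [two_mul_T3x1_odd hodd]; norm_num
  exact mul_left_cancel₀ two_ne_zero h4

lemma T3x1_two : T3x1 (2:ℤ_[2]) = 1 := by
  have hc : (2:ℤ_[2]) ∣ 2 := dvd_refl 2
  have h4 : 2 * T3x1 (2:ℤ_[2]) = 2 * 1 := by rw [two_mul_T3x1_even hc]; norm_num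
  exact mul_left_cancel₀ two_ne_zero h4


/-- If `H : ℤ₂ → F₂[[q]]` is any conjugacy from `T` to `T_{1,1+q²}`, then for every
positive integer `n`, the `T`-orbit of `n` contains `1` iff `H(n)` is a polynomial. -/
theorem orbit_one_iff_isPolynomial (H : ℤ_[2] → PowerSeries (ZMod 2))
    (hbij : Function.Bijective H)
    (hconj : H ∘ T3x1 = Tab 1 (1 + X ^ 2) ∘ H)
    (n : ℕ) (hn : 0 < n) :
    (∃ k : ℕ, T3x1^[k] (n : ℤ_[2]) = 1) ↔ IsPolynomial (H (n : ℤ_[2])) := by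
  have hconj' : ∀ (k : ℕ) (x : ℤ_[2]),
      H (T3x1^[k] x) = (Tab 1 (1+X^2))^[k] (H x) := by
    intro k
    induction k with
    | zero => intro x; simp
    | succ k ih =>
      intro x
      have hc := congrFun hconj (T3x1^[k] x)
      simp only [Function.comp_apply] at hc
      rw [Function.iterate_succ_apply', Function.iterate_succ_apply', hc, ih]
  have isPoly_iter : ∀ (k : ℕ) (x : PowerSeries (ZMod 2)),
      IsPolynomial ((Tab 1 (1+X^2))^[k] x) ↔ IsPolynomial x := by
    intro k
    induction k with
    | zero => intro x; rfl
    | succ k ih =>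
      intro x
      rw [Function.iterate_succ_apply, ih, isPoly_Tab_iff]
  constructor
  · rintro ⟨k, hk⟩
    have e2 : T3x1^[2] (1:ℤ_[2]) = 1 := by
      simp [Function.iterate_succ_apply', T3x1_one, T3x1_two]
    have hfix : Tab 1 (1+X^2) (Tab 1 (1+X^2) (H 1)) = H 1 := by
      have := hconj' 2 1
      rw [e2] at this
      simpa [Function.iterate_succ_apply'] using this.symm
    have hpoly1 : IsPolynomial (H 1) := by
      rcases periodic2_Tab hfix with h | h | h | h <;> rw [h]
      · exact isPoly_zero
      · exact isPoly_one
      · exact isPoly_X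
      · exact isPoly_add isPoly_one isPoly_X
    have := hconj' k ((n : ℤ_[2]))
    rw [hk] at this
    exact (isPoly_iter k _).mp (this ▸ hpoly1)
  · intro hpoly
    obtain ⟨k, hk⟩ := orbit_of_isPoly hpoly
    rw [← hconj' k] at hk
    have hcast : T3x1^[k] ((n:ℕ):ℤ_[2]) = ((TN^[k] n : ℕ):ℤ_[2]) := iterate_cast k n
    have hmpos : 0 < TN^[k] n := TN_iter_pos k hn
    have hTT : Tab 1 (1+X^2) (Tab 1 (1+X^2) (H (T3x1^[k] ↑n))) = H (T3x1^[k] ↑n) :=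
      Tab_Tab_of_inS hk
    have hper : T3x1 (T3x1 (T3x1^[k] ↑n)) = T3x1^[k] ↑n := by
      apply hbij.injective
      have := hconj' 2 (T3x1^[k] ↑n)
      simp only [Function.iterate_succ_apply', Function.iterate_zero_apply] at this ⊢
      rw [this, hTT]
    rw [hcast] at hper
    set m := TN^[k] n with hm
    rcases periodic2_T3x1 hper with h0 | hm1 | h1 | h2
    · exfalso
      have : m = 0 := Nat.cast_injective (R := ℤ_[2]) (by simpa using h0)
      omega
    · exfalso
      have : ((m+1 : ℕ):ℤ_[2]) = 0 := by push_cast [hm1]; ring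
      have : m + 1 = 0 := Nat.cast_injective (R := ℤ_[2]) (by simpa using this)
      omega
    · exact ⟨k, hcast.trans h1⟩
    · refine ⟨k+1, ?_⟩
      rw [Function.iterate_succ_apply', hcast, h2, T3x1_two]
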